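/- Suppose points c, a, d satisfy |ca| = 11·4^{i-1}, |da| = 2·4^{i-1}, |cd| = 9·4^{i-1} + α with 0 < α ≤ 1/10 for an integer i ≥ 1, and let d* be the point on segment ca with |d* a| = 2·4^{i-1}. Then |d d*| < √(4^i/11). -/

import Mathlib

theorem dist_d_dstar_bound (i : ℕ) (hi : 1 ≤ i) (α : ℝ) (hα0 : 0 < α) (hα : α ≤ 1/10)
    (c a d dstar : EuclideanSpace ℝ (Fin 2))
    (hca : dist c a = 11 * 4^(i-1))
    (hda : dist d a = 2 * 4^(i-1))
    (hcd : dist c d = 9 * 4^(i-1) + α)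
    -- d* is the point on segment ca with |d* a| = 2·4^{i-1}
    (hdstar : dstar = a + (2/11 : ℝ) • (c - a)) :
    dist d dstar < Real.sqrt (4^i / 11) := by
  set r : ℝ := 4^(i-1) with hr
  have hr1 : (1:ℝ) ≤ r := one_le_pow₀ (by norm_num : (1:ℝ) ≤ 4)
  set x := c - a with hx
  set y := d - a with hy
  have h1 : ‖x‖ = 11 * r := by rw [hx, ← dist_eq_norm]; exact hca
  have h2 : ‖y‖ = 2 * r := by rw [hy, ← dist_eq_norm]; exact hda
  have h3 : ‖x - y‖ = 9 * r + α := by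
    have : x - y = c - d := by rw [hx, hy]; abel
    rw [this, ← dist_eq_norm]; exact hcd
  have hip : (inner ℝ x y : ℝ) = (‖x‖^2 + ‖y‖^2 - ‖x - y‖^2) / 2 := by
    have e := norm_sub_sq_real x y
    linarith
  have hdd : d - dstar = y - (2/11 : ℝ) • x := by
    rw [hdstar, hx, hy]; abel
  have hsq : dist d dstar ^ 2 = (36 * r * α + 2 * α^2) / 11 := by
    rw [dist_eq_norm, hdd, @norm_sub_sq_real, real_inner_smul_right, norm_smul,
      real_inner_comm, hip]
    rw [h1, h2, h3]
    simp [Real.norm_eq_abs]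
    ring
  have hlt : dist d dstar ^ 2 < 4^i / 11 := by
    rw [hsq]
    have h4i : (4:ℝ)^i = 4 * r := by
      rw [hr, ← pow_succ']
      congr 1
      omega
    rw [h4i]
    have : 36 * r * α + 2 * α^2 < 4 * (r * r) := by
      nlinarith [sq_nonneg α, sq_nonneg (r - 1)]
    nlinarith [this]
  have h0 : 0 ≤ dist d dstar := dist_nonneg
  nlinarith [Real.sq_sqrt (by positivity : (0:ℝ) ≤ (4:ℝ)^i / 11),
    Real.sqrt_nonneg ((4:ℝ)^i / 11), hlt, h0]
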